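/- arXiv:1812.00468 — 5 statements merged into one kernel-verified Lean document; each statement's English description precedes it below -/
import Mathlib

section
/- Fix n ≥ 1 and M ≥ 1. Let R = MvPolynomial ((Fin n) × (Fin n)) ℚ, and let A be the n × n matrix over R whose (i,j) entry is the variable X_{(i,j)}. Let m : (Fin n) × (Fin n) → ℕ satisfy Σ_p m(p) = M. Then applying, for each pair p = (i,j), the partial derivative ∂/∂X_{(i,j)} exactly m(i,j) times to the polynomial trace(A^M) yields the constant polynomial (Π_p m(p)!) · N(m), where N(m) is the number of functions α : ZMod M → Fin n such that for every pair (i,j), the number of t ∈ ZMod M with α(t) = i and α(t+1) = j equals m(i,j). (Equivalently, the result equals the number of Euler tours of the multidigraph having m(i,j) distinguishable edges directed from i to j, which is |E(D)|·|𝔈(D)| where 𝔈(D) is the set of Euler circuits of D.) -/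
open Finset MvPolynomial

section Aux

variable {n : ℕ}

private lemma pow_apply_paths {R : Type*} [CommSemiring R] (A : Matrix (Fin n) (Fin n) R) :
    ∀ (k : ℕ) (i j : Fin n), (A ^ k) i j =
      ∑ g : Fin (k + 1) → Fin n,
        if g 0 = i ∧ g (Fin.last k) = j then ∏ t : Fin k, A (g t.castSucc) (g t.succ) else 0
  | 0, i, j => by
      rw [pow_zero]
      rw [Fintype.sum_equiv (Equiv.funUnique (Fin 1) (Fin n)) _
        (fun x => if x = i ∧ x = j then (1 : R) else 0) (fun g => by simp [Fin.last])]
      rcases eq_or_ne i j with rfl | hij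
      · rw [Matrix.one_apply_eq]
        simp
      · rw [Matrix.one_apply_ne hij]
        refine (Finset.sum_eq_zero fun x _ => ?_).symm
        refine if_neg ?_
        rintro ⟨rfl, rfl⟩
        exact hij rfl
  | (k+1), i, j => by
      have lhs : (A ^ (k+1)) i j = ∑ g : Fin (k+1) → Fin n,
          if g (Fin.last k) = j then A i (g 0) * ∏ t : Fin k, A (g t.castSucc) (g t.succ)
          else 0 := by
        rw [pow_succ', Matrix.mul_apply]
        simp only [pow_apply_paths A k, Finset.mul_sum, mul_ite, mul_zero]
        rw [Finset.sum_comm]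
        refine Finset.sum_congr rfl fun g _ => ?_
        simp only [ite_and]
        rw [Finset.sum_ite_eq]
        simp
      rw [lhs]
      conv_rhs => rw [← Equiv.sum_comp (Fin.consEquiv fun _ : Fin (k+2) => Fin n),
        Fintype.sum_prod_type]
      rw [Finset.sum_comm]
      refine Finset.sum_congr rfl fun g _ => ?_
      have hsummand : ∀ x : Fin n,
          (if (Fin.consEquiv fun _ : Fin (k+2) => Fin n) (x, g) 0 = i ∧
              (Fin.consEquiv fun _ : Fin (k+2) => Fin n) (x, g) (Fin.last (k+1)) = j then
            ∏ t : Fin (k+1), A ((Fin.consEquiv fun _ : Fin (k+2) => Fin n) (x, g) t.castSucc)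
              ((Fin.consEquiv fun _ : Fin (k+2) => Fin n) (x, g) t.succ)
          else 0)
          = if x = i then
              (if g (Fin.last k) = j then
                A x (g 0) * ∏ t : Fin k, A (g t.castSucc) (g t.succ) else 0) else 0 := by
        intro x
        have hce : ∀ s : Fin (k+2), (Fin.consEquiv fun _ : Fin (k+2) => Fin n) (x, g) s
            = Fin.cons (α := fun _ : Fin (k+2) => Fin n) x g s := fun _ => rfl
        simp only [hce]
        rw [Fin.prod_univ_succ, ite_and]
        simp only [Fin.cons_zero, Fin.castSucc_zero, Fin.cons_succ, ← Fin.succ_last,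
          ← Fin.succ_castSucc]
      simp only [hsummand]
      rw [Finset.sum_ite_eq']
      simp


private def finZModEquiv (M : ℕ) [NeZero M] : Fin M ≃ ZMod M :=
  { toFun := fun t => (t.val : ZMod M)
    invFun := fun z => ⟨z.val, ZMod.val_lt z⟩
    left_inv := fun t => Fin.ext (ZMod.val_cast_of_lt t.isLt)
    right_inv := fun z => ZMod.natCast_rightInverse z }

private lemma trace_pow_eq_sum_cyclic {R : Type*} [CommSemiring R]
    (A : Matrix (Fin n) (Fin n) R) (M : ℕ) [NeZero M] :
    Matrix.trace (A ^ M) =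
      ∑ α : ZMod M → Fin n, ∏ t : ZMod M, A (α t) (α (t + 1)) := by
  set Ψ : (Fin (M + 1) → Fin n) → (ZMod M → Fin n) :=
    fun g t => g ⟨t.val, (ZMod.val_lt t).trans (Nat.lt_succ_self M)⟩ with hΨ
  set Φ : (ZMod M → Fin n) → (Fin (M + 1) → Fin n) :=
    fun α s => α ((s.val : ℕ) : ZMod M) with hΦ
  have hΨΦ : ∀ α, Ψ (Φ α) = α := by
    intro α
    funext t
    show α (((⟨t.val, _⟩ : Fin (M + 1)).val : ℕ) : ZMod M) = α t
    congr 1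
    exact ZMod.natCast_rightInverse t
  have hΦΨ : ∀ g : Fin (M + 1) → Fin n, g (Fin.last M) = g 0 → Φ (Ψ g) = g := by
    intro g hg
    funext s
    show g ⟨((s.val : ℕ) : ZMod M).val, _⟩ = g s
    have hv : ((s.val : ℕ) : ZMod M).val = s.val % M := ZMod.val_natCast M s.val
    rcases lt_or_eq_of_le (Nat.lt_succ_iff.mp s.isLt) with h | h
    · congr 1
      exact Fin.ext (hv.trans (Nat.mod_eq_of_lt h))
    · have hs : s = Fin.last M := Fin.ext h
      subst hs
      rw [hg]
      congr 1
      have h0 : (((Fin.last M).val : ℕ) : ZMod M).val = 0 := by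
        rw [Fin.val_last, ZMod.natCast_self, ZMod.val_zero]
      exact Fin.ext (h0.trans (Fin.val_zero _).symm)
  have hprod : ∀ α : ZMod M → Fin n,
      (∏ t : Fin M, A (Φ α t.castSucc) (Φ α t.succ)) =
        ∏ z : ZMod M, A (α z) (α (z + 1)) := by
    intro α
    refine Fintype.prod_equiv (finZModEquiv M) _ _ fun t => ?_
    show A (α ((t.castSucc.val : ℕ) : ZMod M)) (α ((t.succ.val : ℕ) : ZMod M)) = _
    have h1 : ((t.castSucc.val : ℕ) : ZMod M) = ((t.val : ℕ) : ZMod M) := by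
      rw [Fin.coe_castSucc]
    have h2 : ((t.succ.val : ℕ) : ZMod M) = ((t.val : ℕ) : ZMod M) + 1 := by
      rw [Fin.val_succ]
      push_cast
      ring
    rw [h1, h2]
    rfl
  rw [Matrix.trace]
  simp only [Matrix.diag_apply, pow_apply_paths A M]
  rw [Finset.sum_comm]
  have step1 : ∀ g : Fin (M + 1) → Fin n,
      (∑ i : Fin n, if g 0 = i ∧ g (Fin.last M) = i then
        ∏ t : Fin M, A (g t.castSucc) (g t.succ) else 0)
      = if g (Fin.last M) = g 0 then ∏ t : Fin M, A (g t.castSucc) (g t.succ) else 0 := by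
    intro g
    have h : ∀ i : Fin n, (if g 0 = i ∧ g (Fin.last M) = i then
        ∏ t : Fin M, A (g t.castSucc) (g t.succ) else 0)
        = if g 0 = i then (if g (Fin.last M) = g 0 then
            ∏ t : Fin M, A (g t.castSucc) (g t.succ) else 0) else 0 := by
      intro i
      rcases eq_or_ne (g 0) i with rfl | hi
      · simp
      · simp [hi]
    simp only [h]
    rw [Finset.sum_ite_eq]
    simp
  simp only [step1]
  rw [← Finset.sum_filter]
  refine Finset.sum_bij' (i := fun g _ => Ψ g) (j := fun α _ => Φ α)
    (fun g hg => Finset.mem_univ _) ?_ ?_ ?_ ?_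
  · intro α _
    simp only [Finset.mem_filter, Finset.mem_univ, true_and]
    show α (((Fin.last M).val : ℕ) : ZMod M) = α (((0 : Fin (M + 1)).val : ℕ) : ZMod M)
    congr 1
    rw [Fin.val_last, ZMod.natCast_self, Fin.val_zero, Nat.cast_zero]
  · intro g hg
    simp only [Finset.mem_filter, Finset.mem_univ, true_and] at hg
    exact hΦΨ g hg
  · intro α _
    exact hΨΦ α
  · intro g hg
    simp only [Finset.mem_filter, Finset.mem_univ, true_and] at hg
    conv_lhs => rw [← hΦΨ g hg]
    exact hprod (Ψ g)

variable {ι : Type*} [Fintype ι] [DecidableEq ι] [BEq ι] [LawfulBEq ι]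

private noncomputable def cnt (L : List ι) : ι →₀ ℕ := Finsupp.equivFunOnFinite.symm fun p => L.count p

private lemma cnt_apply (L : List ι) (p : ι) : cnt L p = L.count p := rfl

private lemma cnt_nil : cnt ([] : List ι) = 0 := by
  ext p; simp [cnt_apply]

private lemma cnt_cons (p : ι) (L : List ι) :
    cnt (p :: L) = cnt L + Finsupp.single p 1 := by
  ext q
  rw [Finsupp.add_apply, cnt_apply, cnt_apply, Finsupp.single_apply]
  by_cases h : q = p
  · subst h
    simp [List.count_cons, beq_iff_eq]
  · simp [List.count_cons, beq_iff_eq, h, Ne.symm h]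

private lemma foldr_pderiv_monomial (L : List ι) (d : ι →₀ ℕ) (c : ℚ) :
    L.foldr (fun p f => pderiv p f) (monomial d c) =
      monomial (d - cnt L)
        (c * ((∏ p : ι, (d p).descFactorial (L.count p) : ℕ) : ℚ)) := by
  induction L with
  | nil => simp [cnt_nil]
  | cons p L ih =>
      rw [List.foldr_cons, ih, pderiv_monomial]
      have hexp : d - cnt L - Finsupp.single p 1 = d - cnt (p :: L) := by
        rw [cnt_cons, tsub_tsub]
      have happ : (d - cnt L) p = d p - L.count p := by
        rw [Finsupp.tsub_apply, cnt_apply]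
      have key : (∏ q : ι, (d q).descFactorial ((p :: L).count q))
          = (∏ q : ι, (d q).descFactorial (L.count q)) * (d p - L.count p) := by
        rw [← Finset.mul_prod_erase Finset.univ
            (fun q => (d q).descFactorial ((p :: L).count q)) (Finset.mem_univ p),
          ← Finset.mul_prod_erase Finset.univ
            (fun q => (d q).descFactorial (L.count q)) (Finset.mem_univ p)]
        have herase : (∏ q ∈ Finset.univ.erase p, (d q).descFactorial ((p :: L).count q))
            = ∏ q ∈ Finset.univ.erase p, (d q).descFactorial (L.count q) := by
          refine Finset.prod_congr rfl fun q hq => ?_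
          have : q ≠ p := (Finset.mem_erase.mp hq).1
          simp [List.count_cons, beq_iff_eq, this, Ne.symm this]
        rw [herase]
        have hp : ((p :: L).count p) = L.count p + 1 := by simp [List.count_cons, beq_iff_eq]
        rw [hp, Nat.descFactorial_succ]
        ring
      rw [hexp, happ, key]
      push_cast
      ring_nf

private lemma foldr_pderiv_sum {β : Type*} (L : List ι) (s : Finset β)
    (F : β → MvPolynomial ι ℚ) :
    L.foldr (fun p f => pderiv p f) (∑ x ∈ s, F x)
      = ∑ x ∈ s, L.foldr (fun p f => pderiv p f) (F x) := by
  induction L with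
  | nil => rfl
  | cons p L ih =>
      rw [List.foldr_cons, ih]
      exact map_sum (pderiv p) _ s

private lemma prod_X_eq_monomial {β : Type*} (s : Finset β) (f : β → ι) :
    (∏ t ∈ s, (X (f t) : MvPolynomial ι ℚ))
      = monomial (∑ t ∈ s, Finsupp.single (f t) 1) 1 := by
  induction s using Finset.cons_induction with
  | empty => simp
  | cons a s ha ih =>
      rw [Finset.prod_cons, ih, Finset.sum_cons, ← pow_one (X (f a) : MvPolynomial ι ℚ),
        X_pow_eq_monomial, monomial_mul, one_mul]

end Aux

/-- Applying, for each pair `p = (i,j)`, the partial derivative `∂/∂X_{(i,j)}` exactly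
`m (i,j)` times (in any order, encoded by a list `L` whose multiplicities are `m`) to the
polynomial `trace (A ^ M)`, where `A` is the generic `n × n` matrix of variables, yields
the constant polynomial `(∏_p m(p)!) · N(m)`, where `N(m)` counts the closed walks
`α : ZMod M → Fin n` whose transition counts are given by `m` (equivalently, the Euler
tours of the associated multidigraph). -/
theorem pderiv_trace_pow_eq_euler_tours (n M : ℕ) (hn : 1 ≤ n) (hM : 1 ≤ M)
    (m : Fin n × Fin n → ℕ) (hm : ∑ p : Fin n × Fin n, m p = M)
    (L : List (Fin n × Fin n)) (hL : ∀ p, L.count p = m p) :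
    L.foldr (fun p f => MvPolynomial.pderiv p f)
        (Matrix.trace
          ((Matrix.of fun i j : Fin n =>
            (MvPolynomial.X (i, j) : MvPolynomial (Fin n × Fin n) ℚ)) ^ M)) =
      MvPolynomial.C
        (((∏ p : Fin n × Fin n, (m p).factorial) *
          Nat.card {α : ZMod M → Fin n //
            ∀ p : Fin n × Fin n,
              Nat.card {t : ZMod M // α t = p.1 ∧ α (t + 1) = p.2} = m p} : ℕ) : ℚ) := by
  classical
  haveI : NeZero M := ⟨by omega⟩
  rw [trace_pow_eq_sum_cyclic]
  have hA : ∀ α : ZMod M → Fin n,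
      (∏ t : ZMod M, (Matrix.of fun i j : Fin n =>
          (X (i, j) : MvPolynomial (Fin n × Fin n) ℚ)) (α t) (α (t + 1)))
        = monomial (∑ t : ZMod M, Finsupp.single (α t, α (t + 1)) 1) 1 := fun α =>
    prod_X_eq_monomial Finset.univ (fun t => (α t, α (t + 1)))
  simp only [hA]
  rw [foldr_pderiv_sum]
  have hd : ∀ (α : ZMod M → Fin n) (p : Fin n × Fin n),
      (∑ t : ZMod M, Finsupp.single (α t, α (t + 1)) 1) p
        = Nat.card {t : ZMod M // α t = p.1 ∧ α (t + 1) = p.2} := by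
    intro α p
    rw [Finsupp.finset_sum_apply, Nat.card_eq_fintype_card, Fintype.card_subtype,
      Finset.card_filter]
    refine Finset.sum_congr rfl fun t _ => ?_
    rw [Finsupp.single_apply]
    exact if_congr (by simp [Prod.ext_iff]) rfl rfl
  have hdsum : ∀ α : ZMod M → Fin n,
      (∑ p : Fin n × Fin n, (∑ t : ZMod M, Finsupp.single (α t, α (t + 1)) 1) p) = M := by
    intro α
    simp only [Finsupp.finset_sum_apply]
    rw [Finset.sum_comm]
    have h1 : ∀ t : ZMod M,
        (∑ p : Fin n × Fin n, (Finsupp.single (α t, α (t + 1)) 1) p) = 1 := by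
      intro t
      simp only [Finsupp.single_apply]
      rw [Finset.sum_ite_eq]
      simp
    simp only [h1]
    simp [ZMod.card]
  have key : ∀ α : ZMod M → Fin n,
      L.foldr (fun p f => pderiv p f)
          (monomial (∑ t : ZMod M, Finsupp.single (α t, α (t + 1)) 1) (1 : ℚ))
        = if (∀ p : Fin n × Fin n,
              Nat.card {t : ZMod M // α t = p.1 ∧ α (t + 1) = p.2} = m p)
          then C (((∏ p : Fin n × Fin n, (m p).factorial : ℕ)) : ℚ) else 0 := by
    intro α
    have hdα := hd α
    have hdsumα := hdsum α
    rw [foldr_pderiv_monomial]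
    set d := ∑ t : ZMod M, Finsupp.single (α t, α (t + 1)) 1 with hdset
    by_cases h : ∀ p : Fin n × Fin n,
        Nat.card {t : ZMod M // α t = p.1 ∧ α (t + 1) = p.2} = m p
    · rw [if_pos h]
      have hdp : ∀ p, d p = m p := fun p => (hdα p).trans (h p)
      have hexp : d - cnt L = 0 := by
        ext p
        rw [Finsupp.tsub_apply, cnt_apply, hL, hdp]
        simp
      have hcoef : (∏ p : Fin n × Fin n, (d p).descFactorial (L.count p))
          = ∏ p : Fin n × Fin n, (m p).factorial := by
        refine Finset.prod_congr rfl fun p _ => ?_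
        rw [hdp, hL, Nat.descFactorial_self]
      rw [hexp, hcoef, one_mul, monomial_zero']
    · rw [if_neg h]
      have hlt : ∃ p, d p < m p := by
        by_contra hc
        push_neg at hc
        refine h fun p => ?_
        have hsum : ∑ p : Fin n × Fin n, m p = ∑ p : Fin n × Fin n, d p :=
          hm.trans hdsumα.symm
        have heq := (Finset.sum_eq_sum_iff_of_le fun p _ => hc p).mp hsum
        exact (hdα p).symm.trans (heq p (Finset.mem_univ p)).symm
      obtain ⟨p0, hp0⟩ := hlt
      have hzero : (∏ p : Fin n × Fin n, (d p).descFactorial (L.count p)) = 0 := by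
        refine Finset.prod_eq_zero (Finset.mem_univ p0) ?_
        rw [hL]
        exact Nat.descFactorial_eq_zero_iff_lt.mpr hp0
      rw [hzero]
      simp
  simp only [key]
  rw [← Finset.sum_filter, Finset.sum_const]
  have hcard : Nat.card {α : ZMod M → Fin n //
      ∀ p : Fin n × Fin n,
        Nat.card {t : ZMod M // α t = p.1 ∧ α (t + 1) = p.2} = m p}
      = (Finset.univ.filter fun α : ZMod M → Fin n =>
          ∀ p : Fin n × Fin n,
            Nat.card {t : ZMod M // α t = p.1 ∧ α (t + 1) = p.2} = m p).card := by
    rw [Nat.card_eq_fintype_card, Fintype.card_subtype]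
  rw [hcard, nsmul_eq_mul, Nat.cast_mul,
    show ((((Finset.univ.filter fun α : ZMod M → Fin n =>
        ∀ p : Fin n × Fin n,
          Nat.card {t : ZMod M // α t = p.1 ∧ α (t + 1) = p.2} = m p).card : ℕ)) :
      MvPolynomial (Fin n × Fin n) ℚ) = C (((Finset.univ.filter fun α : ZMod M → Fin n =>
        ∀ p : Fin n × Fin n,
          Nat.card {t : ZMod M // α t = p.1 ∧ α (t + 1) = p.2} = m p).card : ℕ) : ℚ)
      from (map_natCast C _).symm, ← C_mul, mul_comm]
end

section
/- Let n ≥ 1, let σ be a permutation of Fin (n+1), let M_σ be its permutation matrix over ℚ, and let J be the (n+1) × (n+1) all-ones matrix over ℚ. Then, as polynomials in ℚ[X], charpoly(M_σ − J) · (X − 1) = charpoly(M_σ) · (X + n). Equivalently, the spectrum (with multiplicity) of M_σ − J is obtained from the spectrum of M_σ by deleting one copy of the eigenvalue 1 and inserting the eigenvalue −n. -/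
open Polynomial Matrix

set_option maxHeartbeats 1000000


/-- For a permutation `σ` of `Fin (n+1)` with permutation matrix `M_σ` (entry `(i,j)` equal
to `1` iff `σ j = i`) and `J` the all-ones matrix, the spectrum of `M_σ - J` is obtained from
that of `M_σ` by deleting one copy of the eigenvalue `1` and inserting `-n`; as polynomials,
`charpoly (M_σ - J) · (X - 1) = charpoly (M_σ) · (X + n)`. -/
theorem charpoly_permMatrix_sub_allOnes (n : ℕ) (hn : 1 ≤ n)
    (σ : Equiv.Perm (Fin (n + 1))) :
    Matrix.charpoly
        ((Matrix.of fun i j => if σ j = i then (1 : ℚ) else 0) -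
          Matrix.of fun _ _ => (1 : ℚ)) * (Polynomial.X - 1) =
      Matrix.charpoly (Matrix.of fun i j => if σ j = i then (1 : ℚ) else 0) *
        (Polynomial.X + Polynomial.C (n : ℚ)) := by
  classical
  set M : Matrix (Fin (n+1)) (Fin (n+1)) ℚ := Matrix.of fun i j => if σ j = i then (1 : ℚ) else 0 with hMdef
  set Jm : Matrix (Fin (n+1)) (Fin (n+1)) ℚ := Matrix.of fun _ _ => (1 : ℚ) with hJdef
  let K := FractionRing ℚ[X]
  let φ : ℚ[X] →+* K := algebraMap ℚ[X] K
  have hinj : Function.Injective φ := IsFractionRing.injective ℚ[X] K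
  apply hinj
  set N : Matrix (Fin (n+1)) (Fin (n+1)) K := (charmatrix M).map φ with hNdef
  set x : K := φ X with hxdef
  set v : Fin (n+1) → K := fun _ => (1 : K) with hvdef
  -- charmatrix of M - Jm
  have hchm : charmatrix (M - Jm) = charmatrix M + Jm.map C := by
    rw [charmatrix, charmatrix, map_sub]
    abel
  -- mapped all-ones = col * row
  have hJK : (Jm.map C).map φ = Matrix.replicateCol Unit v * Matrix.replicateRow Unit v := by
    ext i j
    simp [Matrix.mul_apply, hJdef, hvdef]
  -- row sums
  have hrowM : ∀ i, ∑ j, M i j = 1 := by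
    intro i
    have h : ∀ j, M i j = if j = σ.symm i then (1:ℚ) else 0 := by
      intro j
      simp only [hMdef, Matrix.of_apply]
      congr 1
      simp [Equiv.apply_eq_iff_eq_symm_apply]
    simp [h]
  have hrow : ∀ i, ∑ j, charmatrix M i j = X - 1 := by
    intro i
    have h : ∑ j, charmatrix M i j
        = ∑ j, (Matrix.diagonal (fun _ => (X : ℚ[X])) i j - C (M i j)) := by
      apply Finset.sum_congr rfl
      intro j _
      rw [charmatrix_apply]
    rw [h, Finset.sum_sub_distrib, ← map_sum, hrowM, Polynomial.C_1]
    simp [Matrix.diagonal_apply]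
  -- x - 1 ≠ 0
  have hx1 : x - 1 ≠ 0 := by
    have : φ (X - 1) ≠ 0 := by
      rw [map_ne_zero_iff φ hinj]
      intro h
      have := congrArg (Polynomial.eval 2) h
      norm_num at this
    simpa using this
  -- N has unit determinant
  have hNdet : N.det = φ (M.charpoly) := by
    rw [hNdef, ← RingHom.mapMatrix_apply, ← RingHom.map_det, Matrix.charpoly]
  have hNunit : IsUnit N.det := by
    rw [hNdet, isUnit_iff_ne_zero, map_ne_zero_iff φ hinj]
    exact (Matrix.charpoly_monic M).ne_zero
  -- N *ᵥ v = (x-1) • v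
  have hNv : N *ᵥ v = (x - 1) • v := by
    funext i
    simp only [Matrix.mulVec, dotProduct, hNdef, Matrix.map_apply, hvdef,
      mul_one, Pi.smul_apply, smul_eq_mul]
    rw [← map_sum, hrow i]
    simp [hxdef]
  -- hence N⁻¹ *ᵥ v = (x-1)⁻¹ • v
  have hNinv : N⁻¹ *ᵥ v = (x - 1)⁻¹ • v := by
    have h1 : N *ᵥ ((x - 1)⁻¹ • v) = v := by
      rw [Matrix.mulVec_smul, hNv, smul_smul, inv_mul_cancel₀ hx1, one_smul]
    calc N⁻¹ *ᵥ v = N⁻¹ *ᵥ (N *ᵥ ((x - 1)⁻¹ • v)) := by rw [h1]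
      _ = (N⁻¹ * N) *ᵥ ((x - 1)⁻¹ • v) := by rw [Matrix.mulVec_mulVec]
      _ = (x - 1)⁻¹ • v := by rw [Matrix.nonsing_inv_mul N hNunit, Matrix.one_mulVec]
  -- the 1x1 determinant
  have hdet1 : (1 + Matrix.replicateRow Unit v * N⁻¹ * Matrix.replicateCol Unit v).det
      = 1 + (n + 1 : K) * (x - 1)⁻¹ := by
    rw [Matrix.det_unique]
    have h2 : (Matrix.replicateRow Unit v * N⁻¹ * Matrix.replicateCol Unit v) default default
        = ∑ i, (N⁻¹ *ᵥ v) i := by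
      simp [Matrix.mul_apply, Matrix.mulVec, dotProduct, hvdef,
        Finset.sum_mul, Finset.mul_sum]
      rw [Finset.sum_comm]
    rw [Matrix.add_apply, Matrix.one_apply_eq, h2, hNinv]
    simp [hvdef, Finset.sum_const, mul_comm]
  -- matrix determinant lemma
  have hkey : (N + Matrix.replicateCol Unit v * Matrix.replicateRow Unit v).det
      = N.det * (1 + (n + 1 : K) * (x - 1)⁻¹) := by
    rw [Matrix.det_add_replicateCol_mul_replicateRow hNunit, hdet1]
  -- put everything together
  have hL : φ ((M - Jm).charpoly) = N.det * (1 + (n + 1 : K) * (x - 1)⁻¹) := by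
    rw [Matrix.charpoly, RingHom.map_det, RingHom.mapMatrix_apply, hchm,
      Matrix.map_add, hJK, ← hNdef, hkey]
    exact fun a b => map_add φ a b
  rw [_root_.map_mul, _root_.map_mul, hL, Matrix.charpoly, RingHom.map_det, RingHom.mapMatrix_apply, ← hNdef]
  have hcast : φ (X + C (n:ℚ)) = x + (n : K) := by
    rw [map_add, ← hxdef, Polynomial.C_eq_natCast, map_natCast]
  have hsub : φ (X - 1) = x - 1 := by simp [hxdef]
  rw [hcast, hsub]
  rw [mul_assoc, add_mul, one_mul, mul_assoc, inv_mul_cancel₀ hx1]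
  ring
end

section
/- Let k ≥ 2 and let σ be a derangement of Fin (k+1) (a permutation with σ(j) ≠ j for all j). Let M_σ be its permutation matrix over ℚ, J the (k+1) × (k+1) all-ones matrix, and I the identity. Then, as polynomials in ℚ[X], charpoly(k·I + M_σ − J) · (X − (k+1)) = X · Π_{ℓ ∈ cycleType(σ)} ((X − k)^ℓ − 1), where cycleType(σ) is the multiset of cycle lengths of σ (each ≥ 2, summing to k+1). -/
open Polynomial Matrix Equiv Finset

section Helpers

lemma permMatrix_apply' {n : Type*} [DecidableEq n] {R : Type*} [Zero R] [One R]
    (σ : Equiv.Perm n) (i j : n) :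
    σ.permMatrix R i j = if σ i = j then (1 : R) else 0 := by
  simp [Equiv.Perm.permMatrix, PEquiv.toMatrix_apply, Equiv.toPEquiv, eq_comm]

lemma permMatrix_one' {n : Type*} [Fintype n] [DecidableEq n] :
    ((1 : Equiv.Perm n).permMatrix ℚ) = 1 := by
  ext i j
  rw [permMatrix_apply']
  simp [Matrix.one_apply]
  congr

lemma charpoly_one' {n : Type*} [Fintype n] [DecidableEq n] :
    (1 : Matrix n n ℚ).charpoly = ((X : ℚ[X]) - 1) ^ Fintype.card n := by
  have h : charmatrix (1 : Matrix n n ℚ) = ((X : ℚ[X]) - 1) • (1 : Matrix n n ℚ[X]) := by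
    ext i j
    by_cases hij : i = j
    · subst hij; simp [Matrix.charmatrix_apply_eq]
    · simp [Matrix.charmatrix_apply_ne _ _ _ hij, Matrix.one_apply_ne hij, hij]
  rw [Matrix.charpoly, h, Matrix.det_smul, Matrix.det_one, mul_one, Fintype.card]

lemma fin_add_one_eq_zero_iff {n : ℕ} (x : Fin (n+1)) : x + 1 = 0 ↔ x = Fin.last n := by
  rw [add_eq_zero_iff_eq_neg]
  constructor
  · intro h; rw [h]; ext; rw [Fin.coe_neg_one]; rfl
  · intro h; rw [h]; ext; rw [Fin.coe_neg_one]; rfl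

lemma det_eq_first {R : Type*} [CommRing R] {m : ℕ} (A : Matrix (Fin (m+1)) (Fin (m+1)) R)
    (h : ∀ i, i ≠ 0 → A i 0 = 0) :
    A.det = A 0 0 * (A.submatrix Fin.succ Fin.succ).det := by
  rw [Matrix.det_succ_column_zero, Finset.sum_eq_single 0]
  · simp
  · intro i _ hi; rw [h i hi]; ring
  · simp

lemma det_rowsum {R : Type*} [CommRing R] {m : ℕ} (M : Matrix (Fin (m+1)) (Fin (m+1)) R)
    (s : R) (h : ∀ i, ∑ j, M i j = s) :
    M.det = s * Matrix.det (Matrix.of fun i j : Fin m => M i.succ j.succ - M 0 j.succ) := by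
  set E : Matrix (Fin (m+1)) (Fin (m+1)) R :=
    Matrix.of (fun i j => if j = 0 ∧ i ≠ 0 then 1 else 0) with hE
  have hmulE : ∀ (B : Matrix (Fin (m+1)) (Fin (m+1)) R),
      B * E = Matrix.of fun i j => if j = 0 then (∑ k, B i k) - B i 0 else 0 := by
    intro B
    ext i j
    rw [Matrix.mul_apply]
    by_cases hj : j = 0
    · subst hj
      simp only [hE, Matrix.of_apply, true_and]
      calc ∑ k, B i k * (if k ≠ 0 then (1:R) else 0)
          = ∑ k, (B i k - if k = 0 then B i k else 0) := by
            apply Finset.sum_congr rfl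
            intro k _
            by_cases hk : k = 0 <;> simp [hk]
        _ = (∑ k, B i k) - B i 0 := by
            rw [Finset.sum_sub_distrib, Finset.sum_ite_eq' Finset.univ 0 (B i)]
            simp
    · simp [hE, hj]
  have hEmul : ∀ (B : Matrix (Fin (m+1)) (Fin (m+1)) R),
      E * B = Matrix.of fun i j => if i = 0 then 0 else B 0 j := by
    intro B
    ext i j
    rw [Matrix.mul_apply]
    by_cases hi : i = 0
    · simp [hE, hi]
    · simp only [hE, Matrix.of_apply, hi, if_false]
      rw [Finset.sum_eq_single 0] <;> simp (config := {contextual := true}) [hi]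
  have hEE : E * E = 0 := by
    rw [hEmul]
    ext i j
    simp [hE]
  have hPQ : (1 - E) * (1 + E) = 1 := by
    rw [sub_mul, mul_add, mul_add, one_mul, one_mul, mul_one, hEE]
    abel
  set G : Matrix (Fin (m+1)) (Fin (m+1)) R := (1 - E) * M * (1 + E) with hG
  have hdetG : G.det = M.det := by
    rw [hG, Matrix.det_mul, Matrix.det_mul]
    have h2 : (1 - E).det * (1 + E).det = 1 := by
      rw [← Matrix.det_mul, hPQ, Matrix.det_one]
    calc (1 - E).det * M.det * (1 + E).det
        = M.det * ((1 - E).det * (1 + E).det) := by ring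
      _ = M.det := by rw [h2, mul_one]
  have hGentry : ∀ i j, G i j
      = M i j + (if j = 0 then s - M i 0 else 0)
        - (if i = 0 then 0 else M 0 j)
        - (if i = 0 then 0 else (if j = 0 then s - M 0 0 else 0)) := by
    intro i j
    have hsplit : G = M * (1 + E) - E * (M * (1 + E)) := by
      rw [hG]
      simp only [sub_mul, one_mul, mul_assoc]
    rw [hsplit]
    have hMP : M * (1 + E) = Matrix.of fun i j =>
        M i j + (if j = 0 then s - M i 0 else 0) := by
      rw [mul_add, mul_one, hmulE]
      ext i j
      by_cases hj : j = 0 <;> simp [hj, h i]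
    rw [hMP, hEmul]
    by_cases hi : i = 0 <;> simp [hi] <;> ring
  have hcol : ∀ i, i ≠ 0 → G i 0 = 0 := by
    intro i hi
    rw [hGentry]
    simp [hi]
    try ring
  have hdiag : G 0 0 = s := by rw [hGentry]; simp
  have hsub : G.submatrix Fin.succ Fin.succ
      = Matrix.of fun i j : Fin m => M i.succ j.succ - M 0 j.succ := by
    ext i j
    simp only [Matrix.submatrix_apply, Matrix.of_apply]
    rw [hGentry]
    simp [Fin.succ_ne_zero]
  rw [← hdetG, det_eq_first G hcol, hdiag, hsub]

lemma det_add_ones {R : Type*} [CommRing R] {m : ℕ} (N : Matrix (Fin (m+1)) (Fin (m+1)) R)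
    (r : R) (h : ∀ i, ∑ j, N i j = r) :
    (N + Matrix.of fun _ _ => (1:R)).det * r = N.det * (r + (m+1 : ℕ)) := by
  set J : Matrix (Fin (m+1)) (Fin (m+1)) R := Matrix.of fun _ _ => (1:R) with hJ
  have h1 : ∀ i, ∑ j, (N + J) i j = r + (m+1 : ℕ) := by
    intro i
    simp only [Matrix.add_apply, hJ, Matrix.of_apply, Finset.sum_add_distrib, h i]
    simp [Finset.card_univ]
  rw [det_rowsum N r h, det_rowsum (N + J) _ h1]
  have heq : (Matrix.of fun i j : Fin m => (N + J) i.succ j.succ - (N + J) 0 j.succ)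
      = Matrix.of fun i j : Fin m => N i.succ j.succ - N 0 j.succ := by
    ext i j
    simp [hJ]
  rw [heq]
  ring

lemma charpoly_finRotate' (m : ℕ) :
    ((finRotate (m+2)).permMatrix ℚ).charpoly = X ^ (m+2) - 1 := by
  set N := charmatrix ((finRotate (m+2)).permMatrix ℚ) with hN
  have hentry : ∀ i j, N i j
      = (if i = j then (X : ℚ[X]) else 0) - (if j = i + 1 then 1 else 0) := by
    intro i j
    rw [hN, Matrix.charmatrix_apply, permMatrix_apply']
    simp only [finRotate_succ_apply, Matrix.diagonal_apply, Matrix.smul_apply, Matrix.one_apply]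
    rw [apply_ite (C : ℚ →+* ℚ[X])]
    simp [eq_comm]
  rw [Matrix.charpoly, ← hN, Matrix.det_succ_column_zero]
  rw [← Finset.sum_subset (Finset.subset_univ ({0, Fin.last (m+1)} : Finset (Fin (m+2))))
    (by
      intro x _ hx
      simp only [Finset.mem_insert, Finset.mem_singleton, not_or] at hx
      rw [hentry]
      rw [if_neg hx.1, if_neg (by
        intro h0
        exact hx.2 ((fin_add_one_eq_zero_iff x).mp h0.symm))]
      ring)]
  rw [Finset.sum_pair (by
    intro h
    have := congrArg Fin.val h
    simp [Fin.last] at this)]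
  have h00 : N 0 0 = X := by
    rw [hentry, if_pos rfl, if_neg (by
      rw [zero_add]
      exact fun h => (zero_ne_one h : False))]
    ring
  have hlast0 : N (Fin.last (m+1)) 0 = -1 := by
    rw [hentry, if_neg (Fin.last_pos).ne', if_pos
      (((fin_add_one_eq_zero_iff (Fin.last (m+1))).mpr rfl).symm)]
    ring
  have hupper : (N.submatrix (Fin.succAbove 0) Fin.succ).det = X ^ (m+1) := by
    rw [Fin.succAbove_zero]
    rw [Matrix.det_of_upperTriangular]
    · rw [Finset.prod_congr rfl (g := fun _ => (X : ℚ[X])) (by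
        intro i _
        rw [Matrix.submatrix_apply, hentry, if_pos rfl, if_neg (by
          intro h
          rw [left_eq_add] at h
          exact one_ne_zero h)]
        ring)]
      simp [Finset.card_univ]
    · intro i j hji
      rw [Matrix.submatrix_apply, hentry]
      have hji' : j < i := hji
      have h1 : ¬ (i.succ = j.succ) := by
        simp only [Fin.succ_inj]
        exact hji'.ne'
      rw [if_neg h1, if_neg (by
        intro h2
        by_cases hl : i.succ = Fin.last (m+1)
        · rw [(fin_add_one_eq_zero_iff i.succ).mpr hl] at h2
          exact Fin.succ_ne_zero j h2
        · have hv := congrArg Fin.val h2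
          rw [Fin.val_add_one] at hv
          rw [if_neg hl] at hv
          simp only [Fin.val_succ] at hv
          have : (j : ℕ) < (i : ℕ) := hji'
          omega)]
      ring
  have hlower : (N.submatrix (Fin.succAbove (Fin.last (m+1))) Fin.succ).det
      = (-1 : ℚ[X]) ^ (m+1) := by
    rw [Fin.succAbove_last]
    rw [Matrix.det_of_lowerTriangular]
    · rw [Finset.prod_congr rfl (g := fun _ => (-1 : ℚ[X])) (by
        intro i _
        rw [Matrix.submatrix_apply, hentry]
        have hne : ¬ (i.castSucc = i.succ) := by
          intro h
          have := congrArg Fin.val h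
          simp at this
        have hcl : i.castSucc ≠ Fin.last (m+1) := (Fin.castSucc_lt_last i).ne
        rw [if_neg hne, if_pos (by
          ext
          rw [Fin.val_add_one, if_neg hcl]
          simp)]
        ring)]
      simp [Finset.card_univ]
    · intro i j hji
      have hij : (i : ℕ) < (j : ℕ) := hji
      rw [Matrix.submatrix_apply, hentry]
      have hcl : i.castSucc ≠ Fin.last (m+1) := (Fin.castSucc_lt_last i).ne
      rw [if_neg (by
        intro h
        have := congrArg Fin.val h
        simp only [Fin.coe_castSucc, Fin.val_succ] at this
        omega), if_neg (by
        intro h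
        have hv := congrArg Fin.val h
        rw [Fin.val_add_one, if_neg hcl] at hv
        simp only [Fin.val_succ, Fin.coe_castSucc] at hv
        omega)]
      ring
  rw [h00, hlast0, hupper, hlower]
  have hss : ((-1:ℚ[X])) ^ (m+1) * (-1) ^ (m+1) = 1 := by
    rw [← pow_add]
    exact Even.neg_one_pow ⟨m+1, rfl⟩
  simp only [Fin.val_zero, pow_zero, one_mul, Fin.val_last]
  linear_combination (-1 : ℚ[X]) * hss

lemma permMatrix_conj {α β : Type*} [Fintype α] [DecidableEq α] [Fintype β] [DecidableEq β]
    (g : Equiv.Perm α) (g' : Equiv.Perm β) (E : α ≃ β) (hE : ∀ x, g' (E x) = E (g x)) :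
    g'.permMatrix ℚ = ((g.permMatrix ℚ).submatrix E.symm E.symm : Matrix β β ℚ) := by
  ext i j
  rw [Matrix.submatrix_apply, permMatrix_apply', permMatrix_apply']
  congr 1
  rw [show i = E (E.symm i) from (E.apply_symm_apply i).symm, hE]
  rw [E.apply_symm_apply]
  rw [eq_iff_iff]
  constructor
  · intro h; rw [← h, Equiv.symm_apply_apply]
  · intro h; rw [h, Equiv.apply_symm_apply]

lemma charpoly_conj' {α β : Type*} [Fintype α] [DecidableEq α] [Fintype β] [DecidableEq β]
    (g : Equiv.Perm α) (g' : Equiv.Perm β) (E : α ≃ β) (hE : ∀ x, g' (E x) = E (g x)) :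
    (g'.permMatrix ℚ).charpoly = (g.permMatrix ℚ).charpoly := by
  rw [permMatrix_conj g g' E hE, ← Matrix.reindex_apply, Matrix.charpoly_reindex]

lemma charpoly_block {n : Type*} [Fintype n] [DecidableEq n] (σ : Equiv.Perm n)
    (s : Finset n) (h : ∀ x, x ∈ s ↔ σ x ∈ s) :
    (σ.permMatrix ℚ).charpoly
      = ((σ.subtypePerm (fun x => (h x).symm)).permMatrix ℚ).charpoly *
        (((σ.subtypePerm (fun x => not_iff_not.mpr (h x).symm) :
            Equiv.Perm {x // ¬ x ∈ s}).permMatrix ℚ)).charpoly := by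
  rw [← Matrix.charpoly_reindex (Equiv.sumCompl (fun x => x ∈ s)).symm (σ.permMatrix ℚ)]
  have hb : Matrix.reindex (Equiv.sumCompl (fun x => x ∈ s)).symm
        (Equiv.sumCompl (fun x => x ∈ s)).symm (σ.permMatrix ℚ)
      = Matrix.fromBlocks ((σ.subtypePerm (fun x => (h x).symm)).permMatrix ℚ) 0 0
          ((σ.subtypePerm (fun x => not_iff_not.mpr (h x).symm) :
            Equiv.Perm {x // ¬ x ∈ s}).permMatrix ℚ) := by
    ext i j
    rcases i with x | x <;> rcases j with y | y <;>
      simp only [Matrix.reindex_apply, Matrix.submatrix_apply, Equiv.symm_symm,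
        Equiv.sumCompl_apply_inl, Equiv.sumCompl_apply_inr, Matrix.fromBlocks_apply₁₁,
        Matrix.fromBlocks_apply₁₂, Matrix.fromBlocks_apply₂₁, Matrix.fromBlocks_apply₂₂,
        permMatrix_apply', Matrix.zero_apply]
    · simp [Subtype.ext_iff]
    · rw [if_neg]
      intro hxy
      exact y.2 (hxy ▸ (h x).1 x.2)
    · rw [if_neg]
      intro hxy
      exact x.2 ((h x).2 (hxy ▸ y.2))
    · simp [Subtype.ext_iff]
  rw [hb, Matrix.charpoly_fromBlocks_zero₁₂]

lemma charpoly_cycle_full {m : Type*} [Fintype m] [DecidableEq m] (c : Equiv.Perm m)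
    (hc : c.IsCycle) (hfix : ∀ x, c x ≠ x) :
    (c.permMatrix ℚ).charpoly = X ^ (Fintype.card m) - 1 := by
  have hsupp : c.support = Finset.univ := by
    ext x; simp [Equiv.Perm.mem_support, hfix x]
  have hcard2 : 2 ≤ Fintype.card m := by
    have h2 := hc.two_le_card_support
    rwa [hsupp, Finset.card_univ] at h2
  let e : m ≃ Fin (Fintype.card m) := Fintype.equivFin m
  let f : m ≃ {x : Fin (Fintype.card m) // True} :=
    e.trans (Equiv.subtypeUnivEquiv (fun _ => trivial)).symm
  let c₁ : Equiv.Perm (Fin (Fintype.card m)) := c.extendDomain f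
  have hE : ∀ x, c₁ (e x) = e (c x) := by
    intro x
    have h1 := Equiv.Perm.extendDomain_apply_image c f x
    have h2 : ∀ y : m, ((f y : {x : Fin (Fintype.card m) // True}) : Fin (Fintype.card m)) = e y :=
      fun y => rfl
    rw [← h2 x, ← h2 (c x)]
    exact h1
  have hcp : (c₁.permMatrix ℚ).charpoly = (c.permMatrix ℚ).charpoly :=
    charpoly_conj' c c₁ e hE
  have hct : c₁.cycleType = {Fintype.card m} := by
    rw [Equiv.Perm.cycleType_extendDomain, hc.cycleType, hsupp, Finset.card_univ]
  obtain ⟨m', hm'⟩ : ∃ m', Fintype.card m = m' + 2 := ⟨Fintype.card m - 2, by omega⟩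
  have hconj : IsConj c₁ (finRotate (Fintype.card m)) := by
    apply Equiv.Perm.isConj_of_cycleType_eq
    rw [hct, hm', cycleType_finRotate]
  rw [isConj_iff] at hconj
  obtain ⟨π, hπ⟩ := hconj
  have hE2 : ∀ x, (finRotate (Fintype.card m)) (π x) = π (c₁ x) := by
    intro x
    rw [← hπ]
    simp [Equiv.Perm.mul_apply]
  have hcp2 : ((finRotate (Fintype.card m)).permMatrix ℚ).charpoly = (c₁.permMatrix ℚ).charpoly :=
    charpoly_conj' c₁ (finRotate (Fintype.card m)) π hE2
  rw [← hcp, ← hcp2, hm', charpoly_finRotate']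

lemma charpoly_permMatrix {n : Type*} [Fintype n] [DecidableEq n] (σ : Equiv.Perm n) :
    (σ.permMatrix ℚ).charpoly
      = ((X : ℚ[X]) - 1) ^ (Fintype.card n - σ.cycleType.sum)
        * (σ.cycleType.map fun ℓ => (X : ℚ[X]) ^ ℓ - 1).prod := by
  induction σ using Equiv.Perm.cycle_induction_on with
  | base_one => simp [permMatrix_one', charpoly_one']
  | base_cycles c hc =>
    have h1 : ∀ x, x ∈ c.support ↔ c x ∈ c.support :=
      fun x => (Equiv.Perm.apply_mem_support (f := c) (x := x)).symm
    rw [charpoly_block c _ h1]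
    have h2 : c.subtypePerm (p := fun x => x ∉ c.support) (fun x => not_iff_not.mpr (h1 x).symm) = 1 := by
      ext x
      exact Equiv.Perm.notMem_support.mp x.2
    have hcyc : (c.subtypePerm (fun x => (h1 x).symm)).IsCycle := by
      obtain ⟨a, ha, H⟩ := hc
      refine ⟨⟨a, Equiv.Perm.mem_support.mpr ha⟩, ?_, ?_⟩
      · intro hcon
        exact ha (congrArg Subtype.val hcon)
      · rintro ⟨y, hy⟩ hyne
        obtain ⟨i, hi⟩ := H (Equiv.Perm.mem_support.mp hy)
        refine ⟨i, ?_⟩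
        rw [Equiv.Perm.subtypePerm_zpow c i (fun x => (h1 x).symm)]
        exact Subtype.ext hi
    have hnofix : ∀ x, (c.subtypePerm (fun x => (h1 x).symm)) x ≠ x := by
      rintro ⟨x, hx⟩ hcon
      exact (Equiv.Perm.mem_support.mp hx) (congrArg Subtype.val hcon)
    rw [h2, permMatrix_one', charpoly_one', charpoly_cycle_full (c.subtypePerm (fun x => (h1 x).symm)) hcyc hnofix]
    rw [hc.cycleType]
    have hcard1 : Fintype.card {x // x ∈ c.support} = c.support.card := by
      rw [← Fintype.card_coe c.support]
    have hcard2 : Fintype.card {x // ¬ x ∈ c.support}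
        = Fintype.card n - c.support.card := by
      rw [Fintype.card_subtype_compl, hcard1]
    rw [hcard1, hcard2]
    simp
    ring
  | induction_disjoint σ τ hd hc ihσ ihτ =>
    have hτfix : ∀ x ∈ σ.support, τ x = x := fun x hx =>
      (hd x).resolve_left (Equiv.Perm.mem_support.mp hx)
    have hτmem : ∀ x, x ∈ σ.support ↔ τ x ∈ σ.support := by
      intro x
      constructor
      · intro hx; rwa [hτfix x hx]
      · intro hx
        have h2 : τ (τ x) = τ x := hτfix _ hx
        have h3 := τ.injective h2
        rwa [h3] at hx
    have hpσ : ∀ x, x ∈ σ.support ↔ σ x ∈ σ.support :=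
      fun x => (Equiv.Perm.apply_mem_support (f := σ) (x := x)).symm
    have hp : ∀ x, x ∈ σ.support ↔ (σ * τ) x ∈ σ.support := by
      intro x
      rw [Equiv.Perm.mul_apply]
      constructor
      · intro hx
        rw [hτfix x hx]
        exact Equiv.Perm.apply_mem_support.mpr hx
      · intro hx
        exact (hτmem x).mpr (Equiv.Perm.apply_mem_support.mp hx)
    have he1 : (σ * τ).subtypePerm (fun x => (hp x).symm) = σ.subtypePerm (fun x => (hpσ x).symm) := by
      ext x
      simp only [Equiv.Perm.subtypePerm_apply, Equiv.Perm.mul_apply]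
      rw [hτfix _ x.2]
    have he2 : (σ * τ).subtypePerm (p := fun x => x ∉ σ.support) (fun x => not_iff_not.mpr (hp x).symm)
        = τ.subtypePerm (p := fun x => x ∉ σ.support) (fun x => not_iff_not.mpr (hτmem x).symm) := by
      ext x
      simp only [Equiv.Perm.subtypePerm_apply, Equiv.Perm.mul_apply]
      have hτx : τ ↑x ∉ σ.support := fun hmem => x.2 ((hτmem ↑x).mpr hmem)
      rw [Equiv.Perm.notMem_support.mp hτx]
    have he3 : σ.subtypePerm (p := fun x => x ∉ σ.support) (fun x => not_iff_not.mpr (hpσ x).symm) = 1 := by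
      ext x
      exact Equiv.Perm.notMem_support.mp x.2
    have he4 : τ.subtypePerm (fun x => (hτmem x).symm) = 1 := by
      ext x
      exact hτfix _ x.2
    have hcard1 : Fintype.card {x // x ∈ σ.support} = σ.support.card := by
      rw [← Fintype.card_coe σ.support]
    have hcard2 : Fintype.card {x // ¬ x ∈ σ.support}
        = Fintype.card n - σ.support.card := by
      rw [Fintype.card_subtype_compl, hcard1]
    have hsle : σ.support.card ≤ Fintype.card n := by
      rw [← Finset.card_univ]
      exact Finset.card_le_card (Finset.subset_univ _)
    have key : ((σ * τ).permMatrix ℚ).charpoly * ((X : ℚ[X]) - 1) ^ (Fintype.card n)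
        = (σ.permMatrix ℚ).charpoly * (τ.permMatrix ℚ).charpoly := by
      rw [charpoly_block (σ * τ) σ.support hp,
        charpoly_block σ σ.support hpσ,
        charpoly_block τ σ.support hτmem,
        he1, he2, he3, he4, permMatrix_one', permMatrix_one', charpoly_one', charpoly_one',
        hcard1, hcard2]
      have hpow : ((X : ℚ[X]) - 1) ^ (Fintype.card n - σ.support.card)
          * ((X : ℚ[X]) - 1) ^ σ.support.card = ((X : ℚ[X]) - 1) ^ (Fintype.card n) := by
        rw [← pow_add]
        congr 1
        omega
      rw [← hpow]
      ring
    have hX1 : ((X : ℚ[X]) - 1) ≠ 0 := by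
      have := Polynomial.X_sub_C_ne_zero (1 : ℚ)
      simpa using this
    apply mul_right_cancel₀ (pow_ne_zero (Fintype.card n) hX1)
    rw [key, ihσ, ihτ, Equiv.Perm.Disjoint.cycleType_mul hd]
    rw [Multiset.sum_add, Multiset.map_add, Multiset.prod_add]
    have ha := σ.sum_cycleType
    have hb := τ.sum_cycleType
    have hle : σ.cycleType.sum + τ.cycleType.sum ≤ Fintype.card n := by
      rw [ha, hb]
      calc σ.support.card + τ.support.card = (σ.support ∪ τ.support).card :=
            (Finset.card_union_of_disjoint (Equiv.Perm.Disjoint.disjoint_support hd)).symm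
        _ ≤ Fintype.card n := by
            rw [← Finset.card_univ]
            exact Finset.card_le_card (Finset.subset_univ _)
    have hτle : τ.cycleType.sum ≤ Fintype.card n := le_trans (Nat.le_add_left _ _) hle
    have hσle : σ.cycleType.sum ≤ Fintype.card n := le_trans (Nat.le_add_right _ _) hle
    have hpow2 : ((X:ℚ[X]) - 1) ^ (Fintype.card n - σ.cycleType.sum)
          * ((X:ℚ[X]) - 1) ^ (Fintype.card n - τ.cycleType.sum)
        = ((X:ℚ[X]) - 1) ^ (Fintype.card n - (σ.cycleType.sum + τ.cycleType.sum))
          * ((X:ℚ[X]) - 1) ^ (Fintype.card n) := by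
      rw [← pow_add, ← pow_add]
      congr 1
      omega
    linear_combination ((σ.cycleType.map fun ℓ => (X:ℚ[X]) ^ ℓ - 1).prod
      * (τ.cycleType.map fun ℓ => (X:ℚ[X]) ^ ℓ - 1).prod) * hpow2

end Helpers

/-- For a derangement `σ` of `Fin (k+1)` with permutation matrix `M_σ`, all-ones matrix `J`
and identity `I`, one has
`charpoly (k·I + M_σ - J) · (X - (k+1)) = X · ∏_{ℓ ∈ cycleType σ} ((X - k)^ℓ - 1)`. -/
theorem charpoly_simplex_laplacian (k : ℕ) (hk : 2 ≤ k)
    (σ : Equiv.Perm (Fin (k + 1))) (hσ : ∀ j, σ j ≠ j) :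
    Matrix.charpoly
        ((k : ℚ) • (1 : Matrix (Fin (k + 1)) (Fin (k + 1)) ℚ) +
          (Matrix.of fun i j => if σ j = i then (1 : ℚ) else 0) -
          Matrix.of fun _ _ => (1 : ℚ)) *
        (Polynomial.X - Polynomial.C ((k : ℚ) + 1)) =
      Polynomial.X *
        (σ.cycleType.map fun ℓ =>
          (Polynomial.X - Polynomial.C (k : ℚ)) ^ ℓ - 1).prod := by
  classical
  have hM : (Matrix.of fun i j => if σ j = i then (1:ℚ) else 0) = (σ⁻¹).permMatrix ℚ := by
    ext i j
    rw [permMatrix_apply', Matrix.of_apply]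
    rcases eq_or_ne (σ j) i with h | h
    · rw [if_pos h, if_pos (by rw [← h]; exact σ.symm_apply_apply j)]
    · rw [if_neg h, if_neg (fun hc => h (by rw [← hc]; exact σ.apply_symm_apply i))]
  rw [hM]
  set A : Matrix (Fin (k+1)) (Fin (k+1)) ℚ := (k:ℚ) • 1 + (σ⁻¹).permMatrix ℚ with hA
  -- the characteristic matrix of `A - J` is `charmatrix A + ones`
  have hBA : charmatrix (A - Matrix.of fun _ _ => (1:ℚ))
      = charmatrix A + Matrix.of fun _ _ => (1:ℚ[X]) := by
    apply Matrix.ext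
    intro i j
    rw [Matrix.add_apply, Matrix.charmatrix_apply, Matrix.charmatrix_apply]
    simp only [Matrix.sub_apply, Matrix.of_apply, map_sub, Polynomial.C_1]
    ring
  -- row sums of A
  have hA_row : ∀ i, ∑ j, A i j = (k:ℚ) + 1 := by
    intro i
    rw [hA]
    simp only [Matrix.add_apply, Matrix.smul_apply, Matrix.one_apply, permMatrix_apply',
      smul_eq_mul, mul_ite, mul_one, mul_zero]
    rw [Finset.sum_add_distrib, Finset.sum_ite_eq Finset.univ i (fun _ => (k:ℚ)),
      Finset.sum_ite_eq Finset.univ (σ⁻¹ i) (fun _ => (1:ℚ))]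
    simp
  -- row sums of charmatrix A
  have hrow : ∀ i, ∑ j, (charmatrix A) i j = (X : ℚ[X]) - C ((k:ℚ)+1) := by
    intro i
    have hcm : ∀ j, charmatrix A i j = (if i = j then (X:ℚ[X]) else 0) - C (A i j) := by
      intro j
      rw [Matrix.charmatrix_apply]
      simp [Matrix.diagonal_apply]
    rw [Finset.sum_congr rfl fun j _ => hcm j, Finset.sum_sub_distrib]
    rw [Finset.sum_ite_eq Finset.univ i (fun _ => (X:ℚ[X]))]
    rw [← map_sum C _ Finset.univ, hA_row i]
    simp
  have key := det_add_ones (charmatrix A) ((X:ℚ[X]) - C ((k:ℚ)+1)) hrow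
  have hcast : ((X:ℚ[X]) - C ((k:ℚ)+1) + ((k+1 : ℕ):ℚ[X])) = X := by
    have h : C ((k:ℚ)+1) = ((k+1 : ℕ):ℚ[X]) := by
      rw [Polynomial.C_add, Polynomial.C_1, Polynomial.C_eq_natCast]
      push_cast
      ring
    rw [h]
    ring
  -- charpoly of A via the shift
  have hshift : A.charpoly = Polynomial.eval₂ C ((X:ℚ[X]) - C (k:ℚ))
      (((σ⁻¹).permMatrix ℚ).charpoly) := by
    rw [Matrix.charpoly, Matrix.charpoly]
    have hmap : ∀ i j, charmatrix A i j
        = Polynomial.eval₂ C ((X:ℚ[X]) - C (k:ℚ)) (charmatrix ((σ⁻¹).permMatrix ℚ) i j) := by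
      intro i j
      by_cases hij : i = j
      · subst hij
        rw [Matrix.charmatrix_apply_eq, Matrix.charmatrix_apply_eq, Polynomial.eval₂_sub,
          Polynomial.eval₂_X, Polynomial.eval₂_C, hA]
        simp only [Matrix.add_apply, Matrix.smul_apply, Matrix.one_apply_eq, smul_eq_mul, mul_one]
        rw [Polynomial.C_add]
        ring
      · rw [Matrix.charmatrix_apply_ne _ _ _ hij, Matrix.charmatrix_apply_ne _ _ _ hij,
          Polynomial.eval₂_neg, Polynomial.eval₂_C, hA]
        simp [Matrix.one_apply_ne hij]
    have hmap2 : charmatrix A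
        = (Polynomial.eval₂RingHom C ((X:ℚ[X]) - C (k:ℚ))).mapMatrix
            (charmatrix ((σ⁻¹).permMatrix ℚ)) := by
      apply Matrix.ext
      intro i j
      rw [RingHom.mapMatrix_apply, Matrix.map_apply, Polynomial.coe_eval₂RingHom, hmap]
    rw [hmap2, ← RingHom.map_det]
    simp [Polynomial.coe_eval₂RingHom]
  have hsupfull : (σ⁻¹).cycleType.sum = Fintype.card (Fin (k+1)) := by
    rw [Equiv.Perm.sum_cycleType, Equiv.Perm.support_inv]
    have : σ.support = Finset.univ := by
      ext x; simp [Equiv.Perm.mem_support, hσ x]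
    rw [this, Finset.card_univ]
  have hcp : ((σ⁻¹).permMatrix ℚ).charpoly
      = ((σ⁻¹).cycleType.map fun ℓ => (X : ℚ[X]) ^ ℓ - 1).prod := by
    rw [charpoly_permMatrix, hsupfull]
    simp
  have hApoly : A.charpoly
      = (σ.cycleType.map fun ℓ => ((X:ℚ[X]) - C (k:ℚ)) ^ ℓ - 1).prod := by
    rw [hshift, hcp]
    rw [show Polynomial.eval₂ C ((X:ℚ[X]) - C (k:ℚ))
        (((σ⁻¹).cycleType.map fun ℓ => (X : ℚ[X]) ^ ℓ - 1).prod)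
      = (Polynomial.eval₂RingHom C ((X:ℚ[X]) - C (k:ℚ)))
        (((σ⁻¹).cycleType.map fun ℓ => (X : ℚ[X]) ^ ℓ - 1).prod) from rfl]
    rw [map_multiset_prod, Multiset.map_map, Equiv.Perm.cycleType_inv]
    congr 1
    apply Multiset.map_congr rfl
    intro ℓ _
    simp
  -- put everything together
  have hLHS : (A - Matrix.of fun _ _ => (1:ℚ)).charpoly * ((X:ℚ[X]) - C ((k:ℚ)+1))
      = A.charpoly * X := by
    rw [Matrix.charpoly, Matrix.charpoly, hBA]
    rw [key, hcast]
  rw [hLHS, hApoly]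
  ring
end

section
/- For k ≥ 2 let S_k := Σ_{σ ∈ 𝔇_{k+1}} Π_{ℓ ∈ cycleType(σ)} (k^ℓ + (−1)^{ℓ+1}), where 𝔇_{k+1} is the set of derangements of Fin (k+1), and let C_k := S_k / ((k−1)(k+1)). Then log C_k = (2 + o(1)) · k · log k as k → ∞; that is, lim_{k→∞} (log C_k) / (k · log k) = 2. -/
open Finset Filter Real Equiv

private lemma multiset_prod_bounds (a b : ℝ) (ha : 0 ≤ a) (f : ℕ → ℝ)
    (m : Multiset ℕ) (h : ∀ ℓ ∈ m, a ^ ℓ ≤ f ℓ ∧ f ℓ ≤ b ^ ℓ) :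
    a ^ m.sum ≤ (m.map f).prod ∧ (m.map f).prod ≤ b ^ m.sum := by
  induction m using Multiset.induction_on with
  | empty => simp
  | cons ℓ m ih =>
    have hℓ := h ℓ (Multiset.mem_cons_self ℓ m)
    have hm := ih (fun x hx => h x (Multiset.mem_cons_of_mem hx))
    rw [Multiset.map_cons, Multiset.prod_cons, Multiset.sum_cons, pow_add, pow_add]
    have haℓ : (0:ℝ) ≤ a ^ ℓ := pow_nonneg ha ℓ
    have hbℓ : (0:ℝ) ≤ b ^ ℓ := haℓ.trans (hℓ.1.trans hℓ.2)
    constructor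
    · exact mul_le_mul hℓ.1 hm.1 (pow_nonneg ha _) (haℓ.trans hℓ.1)
    · exact mul_le_mul hℓ.2 hm.2 ((pow_nonneg ha _).trans hm.1) hbℓ

private lemma factor_bounds {k ℓ : ℕ} (hk : 2 ≤ k) (hℓ : 2 ≤ ℓ) :
    ((k:ℝ)/2) ^ ℓ ≤ (k:ℝ) ^ ℓ + (-1:ℝ) ^ (ℓ+1) ∧
      (k:ℝ) ^ ℓ + (-1:ℝ) ^ (ℓ+1) ≤ (2*(k:ℝ)) ^ ℓ := by
  have hk2 : (2:ℝ) ≤ (k:ℝ) := by exact_mod_cast hk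
  have hk1 : (1:ℝ) ≤ (k:ℝ) := by linarith
  have h4 : (4:ℝ) ≤ (k:ℝ) ^ ℓ := by
    calc (4:ℝ) = 2 ^ 2 := by norm_num
    _ ≤ (k:ℝ) ^ 2 := by gcongr <;> norm_num
    _ ≤ (k:ℝ) ^ ℓ := by gcongr <;> assumption
  have h2ℓ : (4:ℝ) ≤ (2:ℝ) ^ ℓ := by
    calc (4:ℝ) = 2 ^ 2 := by norm_num
    _ ≤ (2:ℝ) ^ ℓ := by gcongr <;> norm_num
  have hs : (-1:ℝ) ≤ (-1:ℝ) ^ (ℓ+1) ∧ (-1:ℝ) ^ (ℓ+1) ≤ 1 := by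
    rcases Nat.even_or_odd (ℓ+1) with h | h
    · rw [h.neg_one_pow]; norm_num
    · rw [h.neg_one_pow]; norm_num
  have hkp : (0:ℝ) < (k:ℝ) ^ ℓ := by positivity
  constructor
  · have h1 : ((k:ℝ)/2) ^ ℓ = (k:ℝ)^ℓ / 2^ℓ := div_pow _ _ _
    have h2 : (k:ℝ)^ℓ / 2^ℓ ≤ (k:ℝ)^ℓ / 4 := by gcongr (k:ℝ)^ℓ / ?_ <;> norm_num
    rw [h1]
    linarith [hs.1]
  · have h3 : (2*(k:ℝ))^ℓ = 2^ℓ * (k:ℝ)^ℓ := mul_pow _ _ _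
    have h5 : (4:ℝ) * (k:ℝ)^ℓ ≤ 2^ℓ * (k:ℝ)^ℓ :=
      mul_le_mul_of_nonneg_right h2ℓ hkp.le
    rw [h3]
    linarith [hs.2]

private lemma term_bounds {k : ℕ} (hk : 2 ≤ k) (σ : Equiv.Perm (Fin (k+1)))
    (hσ : ∀ j, σ j ≠ j) :
    ((k:ℝ)/2) ^ (k+1) ≤ (σ.cycleType.map fun ℓ => (k:ℝ)^ℓ + (-1:ℝ)^(ℓ+1)).prod ∧
      (σ.cycleType.map fun ℓ => (k:ℝ)^ℓ + (-1:ℝ)^(ℓ+1)).prod ≤ (2*(k:ℝ)) ^ (k+1) := by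
  have hsupp : σ.support = Finset.univ := by
    ext j; simp [Equiv.Perm.mem_support, hσ j]
  have hsum : σ.cycleType.sum = k + 1 := by
    rw [Equiv.Perm.sum_cycleType, hsupp, Finset.card_univ, Fintype.card_fin]
  have h := multiset_prod_bounds ((k:ℝ)/2) (2*(k:ℝ)) (by positivity) _ σ.cycleType
    (fun ℓ hℓ => factor_bounds hk (Equiv.Perm.two_le_of_mem_cycleType hℓ))
  rw [hsum] at h
  exact h

private lemma card_filter_eq_numD (n : ℕ) :
    (Finset.univ.filter (fun σ : Equiv.Perm (Fin n) => ∀ j, σ j ≠ j)).card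
      = numDerangements n := by
  rw [← card_derangements_fin_eq_numDerangements]
  convert (Fintype.card_subtype fun σ : Equiv.Perm (Fin n) => ∀ j, σ j ≠ j).symm using 2
  rfl

private lemma factorial_le_numD : ∀ n : ℕ, Nat.factorial (n+1) ≤ numDerangements (n + 2) := by
  intro n
  induction n with
  | zero => simp [numDerangements_add_two]
  | succ n ih =>
    have h := numDerangements_add_two (n+1)
    calc Nat.factorial (n+2) = (n+2) * Nat.factorial (n+1) := rfl
    _ ≤ (n+2) * numDerangements (n+2) := Nat.mul_le_mul_left _ ih
    _ ≤ (n+2) * (numDerangements (n+1) + numDerangements (n+2)) :=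
        Nat.mul_le_mul_left _ (Nat.le_add_left _ _)
    _ = numDerangements (n+3) := h.symm

private lemma log_factorial_lower : ∀ n : ℕ, (n:ℝ) * Real.log n - n ≤ Real.log (Nat.factorial n) := by
  intro n
  induction n with
  | zero => simp
  | succ n ih =>
    rcases Nat.eq_zero_or_pos n with rfl | hn
    · norm_num
    have hn' : (0:ℝ) < n := by exact_mod_cast hn
    have hfac : Real.log (Nat.factorial (n+1) : ℕ) =
        Real.log (Nat.factorial n : ℕ) + Real.log ((n:ℝ)+1) := by
      rw [Nat.factorial_succ, Nat.cast_mul, Real.log_mul (by positivity)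
        (by exact_mod_cast Nat.cast_ne_zero.mpr n.factorial_ne_zero)]
      push_cast
      ring
    have key : Real.log ((n:ℝ)+1) - Real.log n ≤ 1 / n := by
      rw [← Real.log_div (by positivity) (by positivity)]
      have h1 := Real.log_le_sub_one_of_pos (show (0:ℝ) < ((n:ℝ)+1)/n by positivity)
      have h2 : ((n:ℝ)+1)/n - 1 = 1/n := by field_simp; ring
      linarith
    have key2 : (n:ℝ) * (Real.log ((n:ℝ)+1) - Real.log n) ≤ 1 := by
      have := mul_le_mul_of_nonneg_left key hn'.le
      rwa [mul_one_div, div_self hn'.ne'] at this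
    rw [hfac]
    push_cast
    nlinarith [Real.log_nonneg (show (1:ℝ) ≤ (n:ℝ)+1 by linarith)]

private lemma main_bounds {k : ℕ} (hk : 2 ≤ k) :
    (1 - 1/Real.log k + (1 + 1/(k:ℝ))
        - Real.log 2 * ((1 + 1/(k:ℝ)) * (1/Real.log k)) - 2 * (1/(k:ℝ)))
      ≤ Real.log
            ((∑ σ ∈ Finset.univ.filter
                  (fun σ : Equiv.Perm (Fin (k + 1)) => ∀ j, σ j ≠ j),
                (σ.cycleType.map fun ℓ => (k : ℝ) ^ ℓ + (-1 : ℝ) ^ (ℓ + 1)).prod) /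
              (((k : ℝ) - 1) * ((k : ℝ) + 1))) /
          ((k : ℝ) * Real.log k) ∧
      Real.log
            ((∑ σ ∈ Finset.univ.filter
                  (fun σ : Equiv.Perm (Fin (k + 1)) => ∀ j, σ j ≠ j),
                (σ.cycleType.map fun ℓ => (k : ℝ) ^ ℓ + (-1 : ℝ) ^ (ℓ + 1)).prod) /
              (((k : ℝ) - 1) * ((k : ℝ) + 1))) /
          ((k : ℝ) * Real.log k)
        ≤ 2 * (1 + 1/(k:ℝ)) * (Real.log 2 * (1/Real.log k) + 1) := by
  have hkR : (2:ℝ) ≤ (k:ℝ) := by exact_mod_cast hk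
  have hk0 : (0:ℝ) < (k:ℝ) := by linarith
  have hlogk : 0 < Real.log k := Real.log_pos (by linarith)
  have hden : 0 < (k:ℝ) * Real.log k := by positivity
  set s := Finset.univ.filter (fun σ : Equiv.Perm (Fin (k + 1)) => ∀ j, σ j ≠ j) with hs_def
  set S := ∑ σ ∈ s, (σ.cycleType.map fun ℓ => (k : ℝ) ^ ℓ + (-1 : ℝ) ^ (ℓ + 1)).prod with hS_def
  -- cardinality bounds
  have hcard_lb : Nat.factorial k ≤ s.card := by
    rw [hs_def, card_filter_eq_numD]
    obtain ⟨m, rfl⟩ : ∃ m, k = m + 1 := ⟨k-1, by omega⟩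
    exact factorial_le_numD m
  have hcard_ub : s.card ≤ Nat.factorial (k+1) := by
    calc s.card ≤ (Finset.univ : Finset (Equiv.Perm (Fin (k+1)))).card :=
          Finset.card_filter_le _ _
    _ = Nat.factorial (k+1) := by
        rw [Finset.card_univ, Fintype.card_perm, Fintype.card_fin]
  -- sum bounds
  have hSlb : (Nat.factorial k : ℝ) * ((k:ℝ)/2)^(k+1) ≤ S := by
    have h1 : s.card • ((k:ℝ)/2)^(k+1) ≤ S := by
      refine Finset.card_nsmul_le_sum _ _ _ (fun σ hσ => ?_)
      exact (term_bounds hk σ (by simpa [hs_def] using (Finset.mem_filter.mp hσ).2)).1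
    rw [nsmul_eq_mul] at h1
    refine le_trans ?_ h1
    exact mul_le_mul_of_nonneg_right (by exact_mod_cast hcard_lb) (by positivity)
  have hSub : S ≤ (Nat.factorial (k+1) : ℝ) * (2*(k:ℝ))^(k+1) := by
    have h1 : S ≤ s.card • (2*(k:ℝ))^(k+1) := by
      refine Finset.sum_le_card_nsmul _ _ _ (fun σ hσ => ?_)
      exact (term_bounds hk σ (by simpa [hs_def] using (Finset.mem_filter.mp hσ).2)).2
    rw [nsmul_eq_mul] at h1
    refine h1.trans ?_
    exact mul_le_mul_of_nonneg_right (by exact_mod_cast hcard_ub) (by positivity)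
  have hSpos : 0 < S := lt_of_lt_of_le (by positivity) hSlb
  -- log bounds for S
  have hlogS_lb : (k:ℝ)*Real.log k - k + ((k:ℝ)+1)*(Real.log k - Real.log 2)
      ≤ Real.log S := by
    calc (k:ℝ)*Real.log k - k + ((k:ℝ)+1)*(Real.log k - Real.log 2)
        ≤ Real.log (Nat.factorial k) + ((k:ℝ)+1)*(Real.log k - Real.log 2) := by
          linarith [log_factorial_lower k]
    _ = Real.log ((Nat.factorial k : ℝ) * ((k:ℝ)/2)^(k+1)) := by
          rw [Real.log_mul (by positivity) (by positivity), Real.log_pow,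
            Real.log_div hk0.ne' (by norm_num)]
          push_cast
          ring
    _ ≤ Real.log S := Real.log_le_log (by positivity) hSlb
  have hlogS_ub : Real.log S ≤ 2*((k:ℝ)+1)*(Real.log 2 + Real.log k) := by
    have hf : (Nat.factorial (k+1) : ℝ) ≤ ((k:ℝ)+1)^(k+1) := by
      have := Nat.factorial_le_pow (k+1)
      exact_mod_cast this
    have hl2 : Real.log ((k:ℝ)+1) ≤ Real.log 2 + Real.log k := by
      rw [← Real.log_mul (by norm_num) hk0.ne']
      exact Real.log_le_log (by positivity) (by linarith)
    have hlf : Real.log (Nat.factorial (k+1) : ℝ) ≤ ((k:ℝ)+1)*(Real.log 2 + Real.log k) := by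
      calc Real.log (Nat.factorial (k+1) : ℝ) ≤ Real.log (((k:ℝ)+1)^(k+1)) :=
            Real.log_le_log (by positivity) hf
      _ = ((k:ℝ)+1) * Real.log ((k:ℝ)+1) := by rw [Real.log_pow]; push_cast; ring
      _ ≤ ((k:ℝ)+1)*(Real.log 2 + Real.log k) :=
            mul_le_mul_of_nonneg_left hl2 (by linarith)
    calc Real.log S ≤ Real.log ((Nat.factorial (k+1) : ℝ) * (2*(k:ℝ))^(k+1)) :=
          Real.log_le_log hSpos hSub
    _ = Real.log (Nat.factorial (k+1) : ℝ) + ((k:ℝ)+1)*(Real.log 2 + Real.log k) := by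
          rw [Real.log_mul (by positivity) (by positivity), Real.log_pow,
            Real.log_mul (by norm_num) hk0.ne']
          push_cast
          ring
    _ ≤ 2*((k:ℝ)+1)*(Real.log 2 + Real.log k) := by linarith
  -- denominator log bounds
  have hdpos : (0:ℝ) < ((k:ℝ)-1)*((k:ℝ)+1) := by nlinarith
  have hd1 : (1:ℝ) ≤ ((k:ℝ)-1)*((k:ℝ)+1) := by nlinarith
  have hd_nonneg : 0 ≤ Real.log (((k:ℝ)-1)*((k:ℝ)+1)) := Real.log_nonneg hd1
  have hd_ub : Real.log (((k:ℝ)-1)*((k:ℝ)+1)) ≤ 2 * Real.log k := by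
    calc Real.log (((k:ℝ)-1)*((k:ℝ)+1)) ≤ Real.log ((k:ℝ)^2) :=
          Real.log_le_log hdpos (by nlinarith)
    _ = 2 * Real.log k := by rw [Real.log_pow]; push_cast; ring
  have hq : Real.log (S / (((k:ℝ)-1)*((k:ℝ)+1)))
      = Real.log S - Real.log (((k:ℝ)-1)*((k:ℝ)+1)) :=
    Real.log_div hSpos.ne' hdpos.ne'
  rw [hq]
  constructor
  · have e1 : 1 - 1/Real.log k + (1 + 1/(k:ℝ))
        - Real.log 2 * ((1 + 1/(k:ℝ)) * (1/Real.log k)) - 2 * (1/(k:ℝ))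
        = ((k:ℝ)*Real.log k - k + ((k:ℝ)+1)*(Real.log k - Real.log 2) - 2*Real.log k)
            / ((k:ℝ)*Real.log k) := by
      field_simp
      ring
    rw [e1]
    exact div_le_div_of_nonneg_right (by linarith) hden.le
  · have e2 : 2 * (1 + 1/(k:ℝ)) * (Real.log 2 * (1/Real.log k) + 1)
        = (2*((k:ℝ)+1)*(Real.log 2 + Real.log k)) / ((k:ℝ)*Real.log k) := by
      field_simp
    rw [e2]
    exact div_le_div_of_nonneg_right (by linarith) hden.le

/-- Logarithmic asymptotics of the associated coefficient of the `k`-uniform simplex: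
with `C_k = (1/((k-1)(k+1))) Σ_{σ ∈ 𝔇_{k+1}} ∏_{ℓ ∈ cycleType σ}(k^ℓ + (-1)^{ℓ+1})`,
one has `log C_k = (2 + o(1)) k log k`, i.e. `lim_{k→∞} (log C_k)/(k log k) = 2`. -/
theorem simplex_coefficient_log_asymptotics :
    Filter.Tendsto
      (fun k : ℕ =>
        Real.log
            ((∑ σ ∈ Finset.univ.filter
                  (fun σ : Equiv.Perm (Fin (k + 1)) => ∀ j, σ j ≠ j),
                (σ.cycleType.map fun ℓ => (k : ℝ) ^ ℓ + (-1 : ℝ) ^ (ℓ + 1)).prod) /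
              (((k : ℝ) - 1) * ((k : ℝ) + 1))) /
          ((k : ℝ) * Real.log k))
      Filter.atTop (nhds 2) := by
  have ha : Tendsto (fun k : ℕ => 1/(k:ℝ)) atTop (nhds 0) :=
    tendsto_one_div_atTop_nhds_zero_nat
  have hlog : Tendsto (fun k : ℕ => Real.log k) atTop atTop :=
    Real.tendsto_log_atTop.comp tendsto_natCast_atTop_atTop
  have hb : Tendsto (fun k : ℕ => 1/Real.log k) atTop (nhds 0) := by
    simpa [one_div, Pi.inv_def] using hlog.inv_tendsto_atTop
  have hl : Tendsto (fun k : ℕ => 1 - 1/Real.log k + (1 + 1/(k:ℝ))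
      - Real.log 2 * ((1 + 1/(k:ℝ)) * (1/Real.log k)) - 2 * (1/(k:ℝ)))
      atTop (nhds 2) := by
    have h : Tendsto (fun k : ℕ => 1 - 1/Real.log k + (1 + 1/(k:ℝ))
        - Real.log 2 * ((1 + 1/(k:ℝ)) * (1/Real.log k)) - 2 * (1/(k:ℝ)))
        atTop (nhds (1 - 0 + (1 + 0) - Real.log 2 * ((1 + 0) * 0) - 2 * 0)) :=
      (((tendsto_const_nhds.sub hb).add (tendsto_const_nhds.add ha)).sub
        (tendsto_const_nhds.mul ((tendsto_const_nhds.add ha).mul hb))).sub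
        (tendsto_const_nhds.mul ha)
    convert h using 2
    norm_num
  have hu : Tendsto (fun k : ℕ => 2 * (1 + 1/(k:ℝ)) * (Real.log 2 * (1/Real.log k) + 1))
      atTop (nhds 2) := by
    have h : Tendsto (fun k : ℕ => 2 * (1 + 1/(k:ℝ)) * (Real.log 2 * (1/Real.log k) + 1))
        atTop (nhds (2 * (1 + 0) * (Real.log 2 * 0 + 1))) :=
      (tendsto_const_nhds.mul (tendsto_const_nhds.add ha)).mul
        ((tendsto_const_nhds.mul hb).add tendsto_const_nhds)
    convert h using 2
    norm_num
  refine tendsto_of_tendsto_of_tendsto_of_le_of_le' hl hu ?_ ?_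
  · filter_upwards [eventually_ge_atTop 2] with k hk using (main_bounds hk).1
  · filter_upwards [eventually_ge_atTop 2] with k hk using (main_bounds hk).2
end

section
/- Let f : ℕ → ℕ → ℚ satisfy: f(n, 0) = 1 for all n ≥ 3; f(3, t) = (−1)^t · binom(3, t) for all t; and the convolution recursion f(n+1, t) = Σ_{j=0}^{t} f(n, j) · f(n, t−j) for all n ≥ 3 and all t. Then for every n ≥ 3 and every t, f(n, t) = (−1)^t · binom(3·2^{n−3}, t). In particular f(n, t) ≠ 0 if and only if t ≤ 3·2^{n−3}, so the coefficient threshold of the single 3-uniform edge is Th_v(e) = 3 · (3·2^{v−3}) = 9·2^{v−3} for v ≥ 3. -/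
/-- The codegree-`3t` contribution `f n t` of a single 3-uniform edge on an ambient vertex
set of size `n` satisfies `f n t = (-1)^t · binom(3·2^{n-3}, t)`, given the base cases and
the convolution recursion; in particular `f n t ≠ 0` iff `t ≤ 3·2^{n-3}`, so the coefficient
threshold of the single 3-uniform edge is `9·2^{n-3}`. -/
theorem single_edge_threshold (f : ℕ → ℕ → ℚ)
    (h0 : ∀ n, 3 ≤ n → f n 0 = 1)
    (h3 : ∀ t, f 3 t = (-1 : ℚ) ^ t * (Nat.choose 3 t : ℚ))
    (hrec : ∀ n, 3 ≤ n → ∀ t,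
      f (n + 1) t = ∑ j ∈ Finset.range (t + 1), f n j * f n (t - j)) :
    ∀ n, 3 ≤ n → ∀ t,
      f n t = (-1 : ℚ) ^ t * (Nat.choose (3 * 2 ^ (n - 3)) t : ℚ) ∧
        (f n t ≠ 0 ↔ t ≤ 3 * 2 ^ (n - 3)) := by
  have key : ∀ n, 3 ≤ n → ∀ t,
      f n t = (-1 : ℚ) ^ t * (Nat.choose (3 * 2 ^ (n - 3)) t : ℚ) := by
    intro n
    induction n with
    | zero => omega
    | succ n ih =>
      intro hn t
      rcases Nat.lt_or_ge n 3 with h | h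
      · have hn3 : n + 1 = 3 := by omega
        rw [hn3]
        simpa using h3 t
      · rw [hrec n h t]
        set m := 3 * 2 ^ (n - 3) with hm
        have step : ∀ j ∈ Finset.range (t + 1),
            f n j * f n (t - j)
              = (-1 : ℚ) ^ t * ((Nat.choose m j : ℚ) * (Nat.choose m (t - j) : ℚ)) := by
          intro j hj
          have hjt : j ≤ t := Nat.lt_succ_iff.mp (Finset.mem_range.mp hj)
          rw [ih h j, ih h (t - j)]
          have hsign : (-1 : ℚ) ^ j * (-1 : ℚ) ^ (t - j) = (-1 : ℚ) ^ t := by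
            rw [← pow_add]; congr 1; omega
          calc (-1:ℚ)^j * (Nat.choose m j : ℚ) * ((-1:ℚ)^(t-j) * (Nat.choose m (t-j) : ℚ))
              = ((-1:ℚ)^j * (-1:ℚ)^(t-j)) * ((Nat.choose m j : ℚ) * (Nat.choose m (t-j) : ℚ)) := by
                ring
            _ = (-1:ℚ)^t * ((Nat.choose m j : ℚ) * (Nat.choose m (t-j) : ℚ)) := by rw [hsign]
        rw [Finset.sum_congr rfl step, ← Finset.mul_sum]
        congr 1
        have hv := Nat.add_choose_eq m m t
        rw [Finset.Nat.sum_antidiagonal_eq_sum_range_succ_mk] at hv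
        have hmm : m + m = 3 * 2 ^ (n + 1 - 3) := by
          have : n + 1 - 3 = (n - 3) + 1 := by omega
          rw [this, hm]; ring
        rw [← hmm, hv]
        push_cast
        rfl
  intro n hn t
  refine ⟨key n hn t, ?_⟩
  rw [key n hn t]
  constructor
  · intro hne
    by_contra hle
    push_neg at hle
    rw [Nat.choose_eq_zero_of_lt hle] at hne
    simp at hne
  · intro hle hzero
    have hc : (Nat.choose (3 * 2 ^ (n - 3)) t : ℚ) ≠ 0 := by
      exact Nat.cast_ne_zero.mpr (Nat.choose_pos hle).ne'
    have hs : ((-1 : ℚ) ^ t) ≠ 0 := by positivity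
    exact (mul_ne_zero hs hc) hzero
end
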